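/- For every p ≥ 1, all ζ, α, η, β ∈ Z₂^p with η·α + ζ·β = 0 in ZMod 2, and every real θ, conjugation by the s-rotation leaves the spinor invariant: (R^ζ_α(θ))^† · ((−i)^{ν(η,β)} S^η_β) · R^ζ_α(θ) = (−i)^{ν(η,β)} S^η_β, where ^† denotes conjugate transpose. -/

import Mathlib

open Matrix

/-- `Z₂^p`, the binary strings of length `p`. -/
abbrev Z2 (p : ℕ) : Type := Fin p → ZMod 2

/-- Inner product of two binary strings, valued in `ZMod 2`. -/
def dotp {p : ℕ} (ζ γ : Z2 p) : ZMod 2 := ∑ i, ζ i * γ i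

/-- `(-1)^x` for `x : ZMod 2`, as a complex number. -/
noncomputable def sgn (x : ZMod 2) : ℂ := if x = 0 then 1 else -1

/-- The spinor `S^ζ_α`: the `2^p × 2^p` complex matrix with `(γ, β)` entry
`(-1)^{ζ·γ}` if `γ = β + α` and `0` otherwise. -/
noncomputable def Spinor {p : ℕ} (ζ α : Z2 p) : Matrix (Z2 p) (Z2 p) ℂ :=
  Matrix.of fun γ β => if γ = β + α then sgn (dotp ζ γ) else 0

/-- `ν(ζ,α)`: the number of indices `i` with `ζ i = 1` and `α i = 1`. -/
def nu {p : ℕ} (ζ α : Z2 p) : ℕ :=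
  (Finset.univ.filter fun i => ζ i = 1 ∧ α i = 1).card

/-- The s-rotation `R^ζ_α(θ) = exp(iθ (-i)^{ν(ζ,α)} S^ζ_α)`. -/
noncomputable def sRot {p : ℕ} (ζ α : Z2 p) (θ : ℝ) : Matrix (Z2 p) (Z2 p) ℂ :=
  NormedSpace.exp ((Complex.I * θ * (-Complex.I) ^ nu ζ α) • Spinor ζ α)


lemma zmod2_cases (x : ZMod 2) : x = 0 ∨ x = 1 := by revert x; decide

lemma sgn_add (x y : ZMod 2) : sgn (x + y) = sgn x * sgn y := by
  rcases zmod2_cases x with rfl | rfl <;> rcases zmod2_cases y with rfl | rfl <;>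
    simp [sgn, show (1 + 1 : ZMod 2) = 0 by decide] <;> norm_num

lemma sgn_mul_self (x : ZMod 2) : sgn x * sgn x = 1 := by
  rcases zmod2_cases x with rfl | rfl <;> simp [sgn] <;> norm_num

lemma sgn_star (x : ZMod 2) : star (sgn x) = sgn x := by
  rcases zmod2_cases x with rfl | rfl <;> simp [sgn]

lemma dotp_add_right {p : ℕ} (ζ γ δ : Z2 p) : dotp ζ (γ + δ) = dotp ζ γ + dotp ζ δ := by
  simp [dotp, mul_add, Finset.sum_add_distrib]

lemma z2_add_add {p : ℕ} (a b : Z2 p) : a + b + b = a := by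
  funext i
  show a i + b i + b i = a i
  rcases zmod2_cases (b i) with h | h <;> rw [h] <;>
    simp [add_assoc, show (1 + 1 : ZMod 2) = 0 by decide]
  
lemma spinor_mul {p : ℕ} (ζ α η β : Z2 p) :
    Spinor ζ α * Spinor η β = Matrix.of fun γ δ =>
      if γ = δ + (β + α) then sgn (dotp ζ γ) * (sgn (dotp η γ) * sgn (dotp η α)) else 0 := by
  ext γ δ
  simp only [mul_apply, Spinor, of_apply]
  rw [Finset.sum_eq_single (δ + β)]
  · rw [if_pos rfl, ← add_assoc]
    by_cases hγ : γ = δ + β + α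
    · rw [if_pos hγ, if_pos hγ, hγ]
      have e1 : dotp η (δ + β + α) = dotp η (δ + β) + dotp η α := dotp_add_right ..
      rw [e1, sgn_add, mul_assoc (sgn (dotp η (δ + β))), sgn_mul_self, mul_one]
    · rw [if_neg hγ, if_neg hγ, zero_mul]
  · intro b _ hb
    rw [if_neg hb, mul_zero]
  · simp

lemma nu_cast {p : ℕ} (ζ α : Z2 p) : ((nu ζ α : ℕ) : ZMod 2) = dotp ζ α := by
  rw [nu, dotp, Finset.card_filter, Nat.cast_sum]
  refine Finset.sum_congr rfl fun i _ => ?_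
  rcases zmod2_cases (ζ i) with h1 | h1 <;> rcases zmod2_cases (α i) with h2 | h2 <;>
    simp [h1, h2]

lemma sgn_natCast (n : ℕ) : sgn ((n : ZMod 2)) = (-1 : ℂ) ^ n := by
  induction n with
  | zero => simp [sgn]
  | succ k ih =>
      push_cast
      rw [pow_succ, ← ih, sgn_add]
      simp [sgn]

lemma zmod2_eq_of_add_eq_zero {x y : ZMod 2} (h : x + y = 0) : x = y := by
  rcases zmod2_cases x with h1 | h1 <;> rcases zmod2_cases y with h2 | h2 <;>
    simp_all <;> exact absurd h (by decide)

lemma spinor_commute {p : ℕ} (ζ α η β : Z2 p) (h : dotp η α + dotp ζ β = 0) :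
    Commute (Spinor ζ α) (Spinor η β) := by
  have key : sgn (dotp η α) = sgn (dotp ζ β) := by rw [zmod2_eq_of_add_eq_zero h]
  show Spinor ζ α * Spinor η β = Spinor η β * Spinor ζ α
  rw [spinor_mul, spinor_mul]
  ext γ δ
  simp only [of_apply]
  by_cases hc : γ = δ + (α + β)
  · rw [if_pos (by rw [hc, add_comm α β]), if_pos hc, key]
    ring
  · rw [if_neg (by rw [add_comm β α]; exact hc), if_neg hc]

lemma spinor_conjTranspose {p : ℕ} (ζ α : Z2 p) :
    (Spinor ζ α)ᴴ = sgn (dotp ζ α) • Spinor ζ α := by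
  ext γ δ
  simp only [conjTranspose_apply, Spinor, of_apply, Matrix.smul_apply, smul_eq_mul]
  have hiff : δ = γ + α ↔ γ = δ + α := by
    constructor <;> intro h <;> simp [h, z2_add_add]
  by_cases hc : γ = δ + α
  · have hd : δ = γ + α := hiff.mpr hc
    rw [if_pos hd, if_pos hc, sgn_star, hd, dotp_add_right, sgn_add]
    ring
  · rw [if_neg (fun hx => hc (hiff.mp hx)), if_neg hc, star_zero, mul_zero]

/-- If `η·α + ζ·β = 0`, conjugation by the s-rotation leaves the phased spinor invariant. -/
theorem sRot_conj_invariant {p : ℕ} (hp : 1 ≤ p) (ζ α η β : Z2 p)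
    (h : dotp η α + dotp ζ β = 0) (θ : ℝ) :
    (sRot ζ α θ)ᴴ * ((-Complex.I) ^ nu η β • Spinor η β) * sRot ζ α θ =
      (-Complex.I) ^ nu η β • Spinor η β := by
  set n := nu ζ α with hn
  set c : ℂ := Complex.I * θ * (-Complex.I) ^ n with hcdef
  set M : Matrix (Z2 p) (Z2 p) ℂ := c • Spinor ζ α with hMdef
  have hstar : star c * sgn (dotp ζ α) = -c := by
    rw [← nu_cast, ← hn, sgn_natCast, hcdef]
    have h1 : star (Complex.I * (θ : ℂ) * (-Complex.I) ^ n)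
        = -Complex.I * (θ : ℂ) * Complex.I ^ n := by
      simp [star_mul', Complex.star_def, _root_.map_mul, _root_.map_pow, Complex.conj_I,
        Complex.conj_ofReal, mul_comm, mul_assoc, mul_left_comm]
    rw [h1, neg_pow]
    ring
  have h1 : Mᴴ = -M := by
    rw [hMdef, Matrix.conjTranspose_smul, spinor_conjTranspose, smul_smul, hstar, neg_smul]
  have h2 : Commute M (Spinor η β) := (spinor_commute ζ α η β h).smul_left c
  have hH : (sRot ζ α θ)ᴴ = NormedSpace.exp (-M) := by
    show (NormedSpace.exp M)ᴴ = _
    rw [← Matrix.exp_conjTranspose, h1]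
  have hR : sRot ζ α θ = NormedSpace.exp M := rfl
  have hcomm : Spinor η β * NormedSpace.exp M = NormedSpace.exp M * Spinor η β :=
    (h2.symm.exp_right).eq
  have hinv : NormedSpace.exp (-M) * NormedSpace.exp M = 1 := by
    rw [← Matrix.exp_add_of_commute (-M) M ((Commute.refl M).neg_left), neg_add_cancel,
      NormedSpace.exp_zero]
  rw [hH, hR, Matrix.mul_smul, Matrix.smul_mul, mul_assoc, hcomm, ← mul_assoc, hinv, one_mul]
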